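/- arXiv:2108.08865 — 2 statements merged into one kernel-verified Lean document; each statement's English description precedes it below -/
import Mathlib

section
/- For n ≥ 2, the augmented cube AQ_n is Hamiltonian connected: between every pair of distinct vertices there is a Hamiltonian path. -/
/-- The augmented cube `AQ n` on vertex set `{0,1}^n`: distinct vertices `u, v` are
adjacent iff there is an index `k` such that they agree before `k` and either differ
only at `k` (hypercube-type edge) or differ at `k` and at every later coordinate
(complement-type edge). -/
def AQ (n : ℕ) : SimpleGraph (Fin n → Bool) where
  Adj u v := u ≠ v ∧ ∃ k : Fin n, (∀ i, i < k → u i = v i) ∧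
      ((∀ i, i ≠ k → u i = v i) ∨ (∀ i, k ≤ i → u i ≠ v i))
  symm := by
    constructor
    rintro u v ⟨hne, k, hpre, h⟩
    refine ⟨hne.symm, k, fun i hi => (hpre i hi).symm, ?_⟩
    rcases h with h | h
    · exact Or.inl fun i hi => (h i hi).symm
    · exact Or.inr fun i hi e => h i hi e.symm
  loopless := ⟨fun u h => h.1 rfl⟩

namespace AQAux

lemma aq_adj {n : ℕ} {u v : Fin n → Bool} : (AQ n).Adj u v ↔ u ≠ v ∧ ∃ k : Fin n, (∀ i, i < k → u i = v i) ∧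
      ((∀ i, i ≠ k → u i = v i) ∨ (∀ i, k ≤ i → u i ≠ v i)) := Iff.rfl

/-- Prepend a bit to a vertex of `AQ n`. -/
def ext (n : ℕ) (b : Bool) (x : Fin n → Bool) : Fin (n + 1) → Bool := Fin.cons b x

lemma ext_eq_ext {n : ℕ} {b c : Bool} {x y : Fin n → Bool} :
    ext n b x = ext n c y ↔ b = c ∧ x = y := Fin.cons_inj

lemma ext_zero (n : ℕ) (b : Bool) (x : Fin n → Bool) : ext n b x 0 = b := rfl

lemma ext_succ (n : ℕ) (b : Bool) (x : Fin n → Bool) (j : Fin n) :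
    ext n b x j.succ = x j := by simp [ext]

lemma adj_ext {n : ℕ} (b : Bool) {x y : Fin n → Bool} (h : (AQ n).Adj x y) :
    (AQ (n + 1)).Adj (ext n b x) (ext n b y) := by
  obtain ⟨hne, k, hpre, hk⟩ := aq_adj.mp h
  refine aq_adj.mpr ⟨fun e => hne (ext_eq_ext.mp e).2, k.succ, ?_, ?_⟩
  · intro i hi
    induction i using Fin.cases with
    | zero => rfl
    | succ j =>
      rw [ext_succ, ext_succ]
      exact hpre j (by simpa using hi)
  · rcases hk with hk | hk
    · refine Or.inl (fun i hi => ?_)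
      induction i using Fin.cases with
      | zero => rfl
      | succ j =>
        rw [ext_succ, ext_succ]
        exact hk j (fun e => hi (by rw [e]))
    · refine Or.inr (fun i hi => ?_)
      induction i using Fin.cases with
      | zero => exact absurd (Fin.le_zero_iff.mp hi) (Fin.succ_ne_zero k)
      | succ j =>
        rw [ext_succ, ext_succ]
        exact hk j (by simpa using hi)

/-- The graph homomorphism embedding `AQ n` as one half of `AQ (n+1)`. -/
def homExt (n : ℕ) (b : Bool) : AQ n →g AQ (n + 1) where
  toFun := ext n b
  map_rel' := adj_ext b

lemma adj_cross {n : ℕ} {b c : Bool} (hbc : b ≠ c) (x : Fin n → Bool) :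
    (AQ (n + 1)).Adj (ext n b x) (ext n c x) := by
  refine aq_adj.mpr ⟨fun e => hbc (ext_eq_ext.mp e).1, 0, fun i hi => absurd hi (Fin.not_lt_zero i), ?_⟩
  refine Or.inl (fun i hi => ?_)
  induction i using Fin.cases with
  | zero => exact absurd rfl hi
  | succ j => rw [ext_succ, ext_succ]

lemma adj_crossc {n : ℕ} {b c : Bool} (hbc : b ≠ c) (x : Fin n → Bool) :
    (AQ (n + 1)).Adj (ext n b x) (ext n c (fun i => !(x i))) := by
  refine aq_adj.mpr ⟨fun e => hbc (ext_eq_ext.mp e).1, 0, fun i hi => absurd hi (Fin.not_lt_zero i), ?_⟩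
  refine Or.inr (fun i _ => ?_)
  induction i using Fin.cases with
  | zero => exact hbc
  | succ j => rw [ext_succ, ext_succ]; simp

lemma count_map_ext {n : ℕ} (b : Bool) (d : Bool) (z : Fin n → Bool)
    (S : List (Fin n → Bool)) :
    (S.map (ext n b)).count (ext n d z) = if b = d then S.count z else 0 := by
  split
  · next h =>
    subst h
    exact List.count_map_of_injective S (ext n b) (fun p q e => (ext_eq_ext.mp e).2) z
  · next h =>
    refine List.count_eq_zero.mpr (fun hm => ?_)
    obtain ⟨s, _, hs⟩ := List.mem_map.mp hm
    exact h (ext_eq_ext.mp hs).1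

lemma ham_glue {n : ℕ} (b : Bool) (S₁ S₂ : List (Fin n → Bool))
    (h1 : ∀ z, S₁.count z = 1) (h2 : ∀ z, S₂.count z = 1) (a : Fin (n + 1) → Bool) :
    (S₁.map (ext n b) ++ S₂.map (ext n (!b))).count a = 1 := by
  rw [show a = ext n (a 0) (Fin.tail a) from (Fin.cons_self_tail a).symm]
  rw [List.count_append, count_map_ext, count_map_ext, h1, h2]
  cases b <;> cases hA : a 0 <;> simp [hA]

lemma ham_glue' {n : ℕ} (b : Bool) (x : Fin n → Bool) (SQ SP : List (Fin n → Bool))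
    (hQ : ∀ z, SQ.count z = 1) (hP : ∀ z, (x :: SP).count z = 1) (a : Fin (n + 1) → Bool) :
    (ext n b x :: (SQ.map (ext n (!b)) ++ SP.map (ext n b))).count a = 1 := by
  have hP' := hP (Fin.tail a)
  rw [List.count_cons] at hP'
  simp only [beq_iff_eq] at hP'
  rw [show a = ext n (a 0) (Fin.tail a) from (Fin.cons_self_tail a).symm]
  rw [List.count_cons, List.count_append, count_map_ext, count_map_ext]
  cases b <;> cases hA : a 0 <;> simp [hA, ext_eq_ext, beq_iff_eq] <;> first | exact hP' | exact hQ _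

lemma key1 (u v : Fin 1 → Bool) (huv : u ≠ v) :
    ∃ p : (AQ 1).Walk u v, p.IsHamiltonian := by
  have hadj : (AQ 1).Adj u v := aq_adj.mpr
    ⟨huv, 0, fun i hi => absurd hi (Fin.not_lt_zero i),
      Or.inl fun i hi => absurd (Subsingleton.elim i 0) hi⟩
  refine ⟨SimpleGraph.Walk.cons hadj SimpleGraph.Walk.nil, fun a => ?_⟩
  have h01 : ∀ w z : Fin 1 → Bool, w 0 = z 0 → w = z := fun w z h =>
    funext fun i => by rw [Subsingleton.elim i 0]; exact h
  have hne0 : u 0 ≠ v 0 := fun h => huv (h01 u v h)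
  have : a = u ∨ a = v := by
    by_cases h : a 0 = u 0
    · exact Or.inl (h01 a u h)
    · refine Or.inr (h01 a v ?_)
      cases hA : a 0 <;> cases hU : u 0 <;> cases hV : v 0 <;> simp_all
  simp only [SimpleGraph.Walk.support_cons, SimpleGraph.Walk.support_nil]
  rcases this with rfl | rfl
  · simp [List.count_cons, huv]
  · simp [List.count_cons, Ne.symm huv, huv]

lemma key_step (m : ℕ) (hm : 1 ≤ m)
    (IH : ∀ x y : Fin m → Bool, x ≠ y → ∃ p : (AQ m).Walk x y, p.IsHamiltonian)
    (b c : Bool) (x y : Fin m → Bool) (hne : ext m b x ≠ ext m c y) :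
    ∃ p : (AQ (m + 1)).Walk (ext m b x) (ext m c y), p.IsHamiltonian := by
  by_cases hbc : b = c
  · -- same side
    subst hbc
    have hxy : x ≠ y := fun e => hne (by rw [e])
    obtain ⟨P, hP⟩ := IH x y hxy
    cases P with
    | nil => exact absurd rfl hxy
    | @cons _ x1 _ h P' =>
      obtain ⟨Q, hQ⟩ := IH x x1 h.ne
      have e1 : (AQ (m + 1)).Adj (ext m b x) (ext m (!b) x) :=
        adj_cross (by simp) x
      have e2 : (AQ (m + 1)).Adj (ext m (!b) x1) (ext m b x1) :=
        adj_cross (by simp) x1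
      have e1' : (AQ (m + 1)).Adj (ext m b x) (homExt m (!b) x) := e1
      have e2' : (AQ (m + 1)).Adj (homExt m (!b) x1) (homExt m b x1) := e2
      refine ⟨SimpleGraph.Walk.cons e1'
        ((Q.map (homExt m (!b))).append (SimpleGraph.Walk.cons e2' (P'.map (homExt m b)))),
        fun a => ?_⟩
      have hsup : (SimpleGraph.Walk.cons e1'
          ((Q.map (homExt m (!b))).append (SimpleGraph.Walk.cons e2' (P'.map (homExt m b))))).support
          = ext m b x :: (Q.support.map (ext m (!b)) ++ P'.support.map (ext m b)) := by
        simp only [SimpleGraph.Walk.support_cons, SimpleGraph.Walk.support_append,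
          SimpleGraph.Walk.support_map, List.tail_cons]
        rfl
      refine (congrArg (List.count a) hsup).trans ?_
      exact ham_glue' b x _ _ hQ (fun z => by simpa using hP z) a
  · -- opposite sides
    have hc : c = !b := by cases b <;> cases c <;> simp_all
    subst hc
    have hxxc : x ≠ fun i => !(x i) := fun e => by
      have := congrFun e ⟨0, hm⟩; simp at this
    by_cases hy : (fun i => !(x i)) = y
    · -- complement-type crossing
      obtain ⟨P₁, h1⟩ := IH x (fun i => !(x i)) hxxc
      obtain ⟨P₂, h2⟩ := IH x y (fun e => hxxc (e.trans hy.symm))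
      have edge : (AQ (m + 1)).Adj (ext m b (fun i => !(x i))) (ext m (!b) x) := by
        have := adj_crossc (b := b) (c := !b) (by simp) (fun i => !(x i))
        simpa using this
      have edge' : (AQ (m + 1)).Adj (homExt m b (fun i => !(x i))) (homExt m (!b) x) := edge
      refine ⟨(P₁.map (homExt m b)).append (SimpleGraph.Walk.cons edge' (P₂.map (homExt m (!b)))),
        fun a => ?_⟩
      have hsup : ((P₁.map (homExt m b)).append
          (SimpleGraph.Walk.cons edge' (P₂.map (homExt m (!b))))).support
          = P₁.support.map (ext m b) ++ P₂.support.map (ext m (!b)) := by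
        simp only [SimpleGraph.Walk.support_cons, SimpleGraph.Walk.support_append,
          SimpleGraph.Walk.support_map, List.tail_cons]
        rfl
      refine (congrArg (List.count a) hsup).trans ?_
      exact ham_glue b _ _ h1 h2 a
    · -- hypercube-type crossing
      obtain ⟨P₁, h1⟩ := IH x (fun i => !(x i)) hxxc
      obtain ⟨P₂, h2⟩ := IH (fun i => !(x i)) y hy
      have edge : (AQ (m + 1)).Adj (ext m b (fun i => !(x i))) (ext m (!b) (fun i => !(x i))) :=
        adj_cross (by simp) _
      have edge' : (AQ (m + 1)).Adj (homExt m b (fun i => !(x i))) (homExt m (!b) (fun i => !(x i))) := edge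
      refine ⟨(P₁.map (homExt m b)).append (SimpleGraph.Walk.cons edge' (P₂.map (homExt m (!b)))),
        fun a => ?_⟩
      have hsup : ((P₁.map (homExt m b)).append
          (SimpleGraph.Walk.cons edge' (P₂.map (homExt m (!b))))).support
          = P₁.support.map (ext m b) ++ P₂.support.map (ext m (!b)) := by
        simp only [SimpleGraph.Walk.support_cons, SimpleGraph.Walk.support_append,
          SimpleGraph.Walk.support_map, List.tail_cons]
        rfl
      refine (congrArg (List.count a) hsup).trans ?_
      exact ham_glue b _ _ h1 h2 a

lemma key : ∀ n, 1 ≤ n → ∀ u v : Fin n → Bool, u ≠ v →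
    ∃ p : (AQ n).Walk u v, p.IsHamiltonian := by
  intro n
  induction n with
  | zero => omega
  | succ m ih =>
    intro _ u v huv
    rcases Nat.eq_zero_or_pos m with hm | hm
    · subst hm; exact key1 u v huv
    · have hne : ext m (u 0) (Fin.tail u) ≠ ext m (v 0) (Fin.tail v) := by
        rw [show ext m (u 0) (Fin.tail u) = u from Fin.cons_self_tail u,
           show ext m (v 0) (Fin.tail v) = v from Fin.cons_self_tail v]
        exact huv
      obtain ⟨p, hp⟩ := key_step m hm (fun x y h => ih hm x y h)
        (u 0) (v 0) (Fin.tail u) (Fin.tail v) hne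
      refine ⟨p.copy (Fin.cons_self_tail u) (Fin.cons_self_tail v), fun a => ?_⟩
      have hsc := SimpleGraph.Walk.support_copy p (Fin.cons_self_tail u) (Fin.cons_self_tail v)
      exact (congrArg (List.count a) hsc).trans (hp a)

end AQAux

/-- For `n ≥ 2`, the augmented cube `AQ_n` is Hamiltonian connected: between every pair
of distinct vertices there is a Hamiltonian path. -/
theorem aq_hamiltonian_connected (n : ℕ) (hn : 2 ≤ n) (u v : Fin n → Bool) (huv : u ≠ v) :
    ∃ p : (AQ n).Walk u v, p.IsHamiltonian := by
  exact AQAux.key n (by omega) u v huv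
end

section
/- For every n ≥ 1 and every k with 3 ≤ k ≤ 2^n, the augmented cube AQ_n contains a cycle of length k (for n ≥ 2). -/
/-! ### Numeric xor lemmas -/

lemma xor_bit (a b i j : ℕ) (hi : i < 2) (hj : j < 2) :
    (2*a + i) ^^^ (2*b + j) = 2*(a ^^^ b) + (i ^^^ j) := by
  have hij : i ^^^ j < 2 := by interval_cases i <;> interval_cases j <;> decide
  have key : ∀ x c : ℕ, c < 2 → ∀ m, (2*x + c).testBit (m+1) = x.testBit m := by
    intro x c hc m
    rw [Nat.testBit_succ]
    congr 1
    omega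
  apply Nat.eq_of_testBit_eq
  intro m
  cases m with
  | zero =>
    rw [Nat.testBit_xor, Nat.testBit_zero, Nat.testBit_zero, Nat.testBit_zero]
    have e1 : (2*a + i) % 2 = i := by omega
    have e2 : (2*b + j) % 2 = j := by omega
    have e3 : (2*(a ^^^ b) + (i ^^^ j)) % 2 = i ^^^ j := by omega
    rw [e1, e2, e3]
    interval_cases i <;> interval_cases j <;> decide
  | succ m =>
    rw [Nat.testBit_xor, key a i hi, key b j hj, key _ _ hij, Nat.testBit_xor]

lemma xor_succ (a : ℕ) : ∃ t, a ^^^ (a + 1) = 2 ^ (t + 1) - 1 := by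
  induction a using Nat.strong_induction_on with
  | _ a ih =>
    rcases Nat.even_or_odd a with ⟨b, hb⟩ | ⟨b, hb⟩
    · refine ⟨0, ?_⟩
      have e : a ^^^ (a + 1) = (2*b + 0) ^^^ (2*b + 1) := by congr 1 <;> omega
      rw [e, xor_bit b b 0 1 (by norm_num) (by norm_num), Nat.xor_self]
      decide
    · have hb' : b < a := by omega
      obtain ⟨t, ht⟩ := ih b hb'
      refine ⟨t + 1, ?_⟩
      have e : a ^^^ (a + 1) = (2*b + 1) ^^^ (2*(b+1) + 0) := by congr 1 <;> omega
      rw [e, xor_bit b (b+1) 1 0 (by norm_num) (by norm_num), ht]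
      have h10 : (1:ℕ) ^^^ 0 = 1 := rfl
      have hp : (2:ℕ) ^ (t + 1 + 1) = 2 * 2 ^ (t+1) := by ring
      have hp1 : 1 ≤ (2:ℕ) ^ (t+1) := Nat.one_le_two_pow
      omega

lemma xor_skip (j : ℕ) (hj : j % 4 = 1) : (j - 1) ^^^ (j + 1) = 2 := by
  obtain ⟨c, rfl⟩ : ∃ c, j = 4*c + 1 := ⟨j / 4, by omega⟩
  have e : (4*c + 1 - 1) ^^^ (4*c + 1 + 1) = (2*(2*c+0) + 0) ^^^ (2*(2*c+1) + 0) := by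
    congr 1 <;> omega
  rw [e, xor_bit _ _ 0 0 (by norm_num) (by norm_num)]
  have e2 : (2*c + 0) ^^^ (2*c + 1) = 2*(c ^^^ c) + (0 ^^^ 1) :=
    xor_bit c c 0 1 (by norm_num) (by norm_num)
  rw [Nat.xor_self] at e2
  have hx01 : (0:ℕ) ^^^ 1 = 1 := rfl
  have hx00 : (0:ℕ) ^^^ 0 = 0 := rfl
  omega

lemma xor_compl (n : ℕ) : ∀ x < 2^n, x ^^^ (2^n - 1 - x) = 2^n - 1 := by
  induction n with
  | zero => intro x hx; interval_cases x; decide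
  | succ n ih =>
    intro x hx
    have hp : (2:ℕ)^(n+1) = 2 * 2^n := by ring
    have hp1 : 1 ≤ (2:ℕ)^n := Nat.one_le_two_pow
    obtain ⟨b, r, hr, rfl⟩ : ∃ b r, r < 2 ∧ x = 2*b + r := ⟨x/2, x%2, by omega, by omega⟩
    have hb : b < 2^n := by omega
    have e2 : 2^(n+1) - 1 - (2*b + r) = 2*(2^n - 1 - b) + (1 - r) := by omega
    have h1r : 1 - r < 2 := by omega
    rw [e2, xor_bit b (2^n - 1 - b) r (1-r) hr h1r, ih b hb]
    have : r ^^^ (1 - r) = 1 := by interval_cases r <;> decide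
    omega

def enc (n a : ℕ) : Fin n → Bool := fun i => a.testBit (n - 1 - i.val)

lemma enc_inj {n a b : ℕ} (ha : a < 2^n) (hb : b < 2^n) (h : enc n a = enc n b) : a = b := by
  apply Nat.eq_of_testBit_eq
  intro i
  by_cases hi : i < n
  · have h2 := congrFun h ⟨n - 1 - i, by omega⟩
    simp only [enc] at h2
    have e : n - 1 - (n - 1 - i) = i := by omega
    rwa [e] at h2
  · rw [Nat.testBit_lt_two_pow (lt_of_lt_of_le ha (Nat.pow_le_pow_right (by norm_num) (by omega))),
      Nat.testBit_lt_two_pow (lt_of_lt_of_le hb (Nat.pow_le_pow_right (by norm_num) (by omega)))]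

lemma agree_iff {a b c : ℕ} (h : a ^^^ b = c) (p : ℕ) :
    (a.testBit p = b.testBit p) ↔ c.testBit p = false := by
  rw [← h, Nat.testBit_xor]
  cases a.testBit p <;> cases b.testBit p <;> simp

lemma adj_pow {n a b t : ℕ} (ht : t < n) (h : a ^^^ b = 2 ^ t) :
    (AQ n).Adj (enc n a) (enc n b) := by
  set k : Fin n := ⟨n - 1 - t, by omega⟩ with hk
  refine ⟨?_, ?_⟩
  · intro hEq
    have h2 := congrFun hEq k
    simp only [enc, hk] at h2
    have e : n - 1 - (n - 1 - t) = t := by omega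
    rw [e] at h2
    rw [agree_iff h t, Nat.testBit_two_pow_self] at h2
    exact Bool.true_eq_false.mp h2
  · refine ⟨k, ?_, Or.inl ?_⟩
    · intro i hi
      have hi' : i.val < n - 1 - t := hi
      show a.testBit (n - 1 - i.val) = b.testBit (n - 1 - i.val)
      rw [agree_iff h]
      exact Nat.testBit_two_pow_of_ne (by omega)
    · intro i hi
      have hi' : i.val ≠ n - 1 - t := fun e => hi (Fin.ext e)
      have hlt : i.val < n := i.isLt
      show a.testBit (n - 1 - i.val) = b.testBit (n - 1 - i.val)
      rw [agree_iff h]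
      exact Nat.testBit_two_pow_of_ne (by omega)

lemma adj_ones {n a b t : ℕ} (ht : t < n) (h : a ^^^ b = 2 ^ (t+1) - 1) :
    (AQ n).Adj (enc n a) (enc n b) := by
  set k : Fin n := ⟨n - 1 - t, by omega⟩ with hk
  have hdiff : ∀ p, p ≤ t → a.testBit p ≠ b.testBit p := by
    intro p hp hEq
    rw [agree_iff h, Nat.testBit_two_pow_sub_one] at hEq
    simp only [decide_eq_false_iff_not] at hEq
    omega
  refine ⟨?_, ?_⟩
  · intro hEq
    have h2 := congrFun hEq k
    simp only [enc, hk] at h2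
    have e : n - 1 - (n - 1 - t) = t := by omega
    rw [e] at h2
    exact hdiff t le_rfl h2
  · refine ⟨k, ?_, Or.inr ?_⟩
    · intro i hi
      have hi' : i.val < n - 1 - t := hi
      show a.testBit (n - 1 - i.val) = b.testBit (n - 1 - i.val)
      rw [agree_iff h, Nat.testBit_two_pow_sub_one]
      simp only [decide_eq_false_iff_not]
      omega
    · intro i hi
      have hi' : n - 1 - t ≤ i.val := hi
      have hlt : i.val < n := i.isLt
      exact hdiff (n - 1 - i.val) (by omega)

lemma adj_consec {n a : ℕ} (h : a + 1 < 2^n) : (AQ n).Adj (enc n a) (enc n (a+1)) := by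
  obtain ⟨t, ht⟩ := xor_succ a
  have hlt : a ^^^ (a+1) < 2^n := Nat.xor_lt_two_pow (by omega) h
  have htn : t < n := by
    rw [ht] at hlt
    have h1 : (2:ℕ)^(t+1) ≤ 2^n := by
      have : 1 ≤ (2:ℕ)^(t+1) := Nat.one_le_two_pow
      omega
    have := (Nat.pow_le_pow_iff_right (a := 2) (by norm_num)).mp h1
    omega
  exact adj_ones htn ht

lemma adj_skip {n j : ℕ} (hn : 2 ≤ n) (hj : j % 4 = 1) :
    (AQ n).Adj (enc n (j-1)) (enc n (j+1)) := by
  have h := xor_skip j hj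
  exact adj_pow (t := 1) (by omega) (by rw [h]; norm_num)

lemma adj_close {n x : ℕ} (hn : 1 ≤ n) (hx : x < 2^n) :
    (AQ n).Adj (enc n x) (enc n (2^n - 1 - x)) := by
  have h := xor_compl n x hx
  have e : (2:ℕ)^(n-1+1) - 1 = 2^n - 1 := by congr 2; omega
  exact adj_ones (t := n-1) (by omega) (by rw [h, ← e])

open SimpleGraph

variable {V : Type*}

def mkWalk (G : SimpleGraph V) : (a b : V) → (l : List V) → List.Chain G.Adj a (l ++ [b]) → G.Walk a b
  | _, _, [], h => Walk.cons (List.chain_cons.mp h).1 Walk.nil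
  | _, b, c :: l, h => Walk.cons (List.chain_cons.mp h).1 (mkWalk G c b l (List.chain_cons.mp h).2)

lemma mkWalk_support (G : SimpleGraph V) :
    ∀ (a b : V) (l : List V) (h : List.Chain G.Adj a (l ++ [b])),
      (mkWalk G a b l h).support = a :: (l ++ [b])
  | _, _, [], _ => rfl
  | a, b, c :: l, h => by
      simp only [mkWalk, Walk.support_cons, mkWalk_support G c b l]
      exact congrArg (a :: ·) (mkWalk_support G c b l _)

lemma mkWalk_length (G : SimpleGraph V) :
    ∀ (a b : V) (l : List V) (h : List.Chain G.Adj a (l ++ [b])),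
      (mkWalk G a b l h).length = l.length + 1
  | _, _, [], _ => rfl
  | a, b, c :: l, h => by
      simp only [mkWalk, Walk.length_cons, mkWalk_length G c b l, List.length_cons]
      exact congrArg (· + 1) (mkWalk_length G c b l _)

def adjPairs : List V → List (V × V)
  | a :: b :: l => (a, b) :: adjPairs (b :: l)
  | _ => []

lemma mkWalk_edges (G : SimpleGraph V) :
    ∀ (a b : V) (l : List V) (h : List.Chain G.Adj a (l ++ [b])),
      (mkWalk G a b l h).edges = (adjPairs (a :: (l ++ [b]))).map (fun p => s(p.1, p.2))
  | _, _, [], _ => rfl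
  | a, b, c :: l, h => by
      simp only [mkWalk, Walk.edges_cons, mkWalk_edges G c b l]
      exact congrArg (s(a, c) :: ·) (mkWalk_edges G c b l _)

lemma adjPairs_chain' {R : V → V → Prop} :
    ∀ (L : List V), L.Chain' R → ∀ p q, (p, q) ∈ adjPairs L → R p q := by
  intro L
  induction L with
  | nil => intro _ p q hm; simp [adjPairs] at hm
  | cons a L ih =>
    cases L with
    | nil => intro _ p q hm; simp [adjPairs] at hm
    | cons b L =>
      intro hc p q hm
      rw [List.Chain', List.isChain_cons_cons] at hc
      rcases List.mem_cons.mp hm with he | hm'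
      · obtain ⟨h1, h2⟩ := Prod.mk.injEq .. ▸ he
        cases he
        exact hc.1
      · exact ih hc.2 p q hm'

lemma adjPairs_map {W : Type*} (f : W → V) :
    ∀ (L : List W), adjPairs (L.map f) = (adjPairs L).map (fun p => (f p.1, f p.2)) := by
  intro L
  induction L with
  | nil => rfl
  | cons a L ih =>
    cases L with
    | nil => rfl
    | cons b L =>
      simp only [List.map_cons, adjPairs] at ih ⊢
      rw [ih]

lemma adjPairs_mem : ∀ (L : List ℕ) (p q : ℕ), (p, q) ∈ adjPairs L → p ∈ L ∧ q ∈ L := by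
  intro L
  induction L with
  | nil => intro p q hm; simp [adjPairs] at hm
  | cons a L ih =>
    cases L with
    | nil => intro p q hm; simp [adjPairs] at hm
    | cons b L =>
      intro p q hm
      rcases List.mem_cons.mp hm with he | hm'
      · cases he
        exact ⟨List.mem_cons_self, List.mem_cons_of_mem _ List.mem_cons_self⟩
      · obtain ⟨h1, h2⟩ := ih p q hm'
        exact ⟨List.mem_cons_of_mem _ h1, List.mem_cons_of_mem _ h2⟩

lemma cycle_of_nums {n : ℕ} (a b : ℕ) (l : List ℕ)
    (hbound : ∀ m ∈ a :: (l ++ [b]), m < 2^n)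
    (hnd : (a :: (l ++ [b])).Nodup)
    (hchain : List.Chain (fun p q => p < q ∧ q ≤ p + 2 ∧ (AQ n).Adj (enc n p) (enc n q)) a (l ++ [b]))
    (hclose : (AQ n).Adj (enc n b) (enc n a))
    (hfar : a + 2 < b) :
    ∃ (v : Fin n → Bool) (c : (AQ n).Walk v v), c.IsCycle ∧ c.length = l.length + 2 := by
  have ha2 : a < 2^n := hbound a List.mem_cons_self
  have hb2 : b < 2^n := hbound b (by simp)
  have hchainV : List.Chain (AQ n).Adj (enc n a) ((l ++ [b]).map (enc n)) :=
    List.isChain_map_of_isChain (enc n) (fun p q h => h.2.2) hchain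
  have hchainV' : List.Chain (AQ n).Adj (enc n a) (l.map (enc n) ++ [enc n b]) := by
    simpa using hchainV
  set w := mkWalk (AQ n) (enc n a) (enc n b) (l.map (enc n)) hchainV' with hw
  have hlisteq : (enc n a :: (l.map (enc n) ++ [enc n b])) = (a :: (l ++ [b])).map (enc n) := by
    simp
  have hpath : w.IsPath := by
    rw [SimpleGraph.Walk.isPath_def, mkWalk_support, hlisteq]
    exact List.Nodup.map_on (fun x hx y hy hxy => enc_inj (hbound x hx) (hbound y hy) hxy) hnd
  have hnotin : s(enc n b, enc n a) ∉ w.edges := by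
    intro hmem
    rw [mkWalk_edges] at hmem
    rw [hlisteq, adjPairs_map] at hmem
    simp only [List.map_map, List.mem_map, Function.comp] at hmem
    obtain ⟨⟨p', q'⟩, hm', heq⟩ := hmem
    have hchain2 : (a :: (l ++ [b])).Chain'
        (fun p q => p < q ∧ q ≤ p + 2 ∧ (AQ n).Adj (enc n p) (enc n q)) := hchain
    have hR : p' < q' ∧ q' ≤ p' + 2 ∧ (AQ n).Adj (enc n p') (enc n q') :=
      adjPairs_chain' _ hchain2 p' q' hm'
    obtain ⟨hp'mem, hq'mem⟩ := adjPairs_mem _ p' q' hm'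
    have hp'2 : p' < 2^n := hbound p' hp'mem
    have hq'2 : q' < 2^n := hbound q' hq'mem
    simp only [Sym2.eq_iff] at heq
    rcases heq with ⟨h1, h2⟩ | ⟨h1, h2⟩
    · have e1 := enc_inj hp'2 hb2 h1
      have e2 := enc_inj hq'2 ha2 h2
      omega
    · have e1 := enc_inj hp'2 ha2 h1
      have e2 := enc_inj hq'2 hb2 h2
      omega
  refine ⟨enc n b, SimpleGraph.Walk.cons hclose w, ?_, ?_⟩
  · rw [SimpleGraph.Walk.cons_isCycle_iff]
    exact ⟨hpath, hnotin⟩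
  · rw [SimpleGraph.Walk.length_cons, mkWalk_length]
    simp

lemma chain'_range' {R : ℕ → ℕ → Prop} : ∀ (len s : ℕ),
    (∀ i, s ≤ i → i + 1 < s + len → R i (i+1)) → List.Chain' R (List.range' s len) := by
  intro len
  induction len with
  | zero => intro s _; exact List.IsChain.nil
  | succ len ih =>
    intro s h
    rw [List.range'_succ, List.Chain', List.isChain_cons]
    constructor
    · intro y hy
      cases len with
      | zero => simp at hy
      | succ m =>
        rw [List.range'_succ] at hy
        simp at hy
        subst hy
        exact h s le_rfl (by omega)
    · exact ih (s+1) (fun i hi hi2 => h i (by omega) (by omega))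

lemma range'_decomp (x m : ℕ) :
    x :: (List.range' (x+1) m ++ [x + m + 1]) = List.range' x (m+2) := by
  rw [show m+2 = (m+1)+1 from rfl, List.range'_concat, List.range'_succ]
  have e : x + 1*(m+1) = x + m + 1 := by ring
  rw [e]
  rfl

/-- For `n ≥ 2`, the augmented cube `AQ_n` contains a cycle of every length `k` with
`3 ≤ k ≤ 2^n`. -/
theorem aq_pancyclic (n : ℕ) (hn : 2 ≤ n) (k : ℕ) (hk : 3 ≤ k) (hk' : k ≤ 2 ^ n) :
    ∃ (v : Fin n → Bool) (c : (AQ n).Walk v v), c.IsCycle ∧ c.length = k := by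
  have hp2 : (2:ℕ)^n = 2 * 2^(n-1) := by
    conv_lhs => rw [show n = (n-1)+1 by omega]
    ring
  have hp4 : (4:ℕ) ≤ 2^n := by
    calc (4:ℕ) = 2^2 := rfl
    _ ≤ 2^n := Nat.pow_le_pow_right (by norm_num) hn
  by_cases hk3 : k = 3
  · subst hk3
    have hbound : ∀ m ∈ (0 : ℕ) :: ([1] ++ [3]), m < 2^n := by
      intro m hm
      simp at hm
      rcases hm with rfl | rfl | rfl <;> omega
    have hnd : ((0 : ℕ) :: ([1] ++ [3])).Nodup := by decide
    have hchain : List.Chain (fun p q => p < q ∧ q ≤ p + 2 ∧ (AQ n).Adj (enc n p) (enc n q))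
        0 ([1] ++ [3]) := by
      refine List.Chain.cons ⟨by norm_num, by norm_num, ?_⟩
        (List.Chain.cons ⟨by norm_num, by norm_num, ?_⟩ List.Chain.nil)
      · exact adj_consec (n := n) (a := 0) (by omega)
      · exact adj_pow (n := n) (a := 1) (b := 3) (t := 1) (by omega) (by decide)
    have hclose : (AQ n).Adj (enc n 3) (enc n 0) :=
      adj_ones (n := n) (a := 3) (b := 0) (t := 1) (by omega) (by decide)
    obtain ⟨v, c, hc, hl⟩ := cycle_of_nums 0 3 [1] hbound hnd hchain hclose (by omega)
    exact ⟨v, c, hc, by simpa using hl⟩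
  · rcases Nat.even_or_odd k with ⟨e, he⟩ | ⟨e, he⟩
    · -- even case
      obtain ⟨m, rfl⟩ : ∃ m, k = m + 2 := ⟨k - 2, by omega⟩
      set x := (2^n - (m+2))/2 with hxdef
      have h2x : 2*x = 2^n - (m+2) := by omega
      have hm2 : 2 ≤ m := by omega
      have hxk : x + (m+2) ≤ 2^n := by omega
      have listEq : (x :: (List.range' (x+1) m ++ [x + m + 1])) = List.range' x (m+2) :=
        range'_decomp x m
      have hch' : List.Chain' (fun p q => p < q ∧ q ≤ p + 2 ∧ (AQ n).Adj (enc n p) (enc n q))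
          (List.range' x (m+2)) :=
        chain'_range' _ _ (fun i hi hi2 => ⟨by omega, by omega, adj_consec (by omega)⟩)
      rw [← listEq] at hch'
      have hbound : ∀ i ∈ x :: (List.range' (x+1) m ++ [x + m + 1]), i < 2^n := by
        intro i hi
        rw [listEq, List.mem_range'_1] at hi
        omega
      have hnd : (x :: (List.range' (x+1) m ++ [x + m + 1])).Nodup := by
        rw [listEq]
        exact List.nodup_range'
      have hclose : (AQ n).Adj (enc n (x + m + 1)) (enc n x) := by
        have e2 : x + m + 1 = 2^n - 1 - x := by omega
        rw [e2]
        exact (adj_close (by omega) (by omega)).symm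
      obtain ⟨v, c, hc, hl⟩ := cycle_of_nums x (x + m + 1) (List.range' (x+1) m)
        hbound hnd hch' hclose (by omega)
      refine ⟨v, c, hc, ?_⟩
      rw [hl, List.length_range']
    · -- odd case
      have hk5 : 5 ≤ k := by omega
      set x := (2^n - 1 - k)/2 with hxdef
      have h2x : 2*x = 2^n - 1 - k := by omega
      set j := x + (4 - x % 4) % 4 + 1 with hjdef
      have hj4 : j % 4 = 1 := by omega
      have hjlo : x < j := by omega
      have hjhi : j + 1 ≤ x + k := by omega
      have hxk : x + k = 2^n - 1 - x := by omega
      have e1 : x :: List.range' (x+1) (j-x-1) = List.range' x (j-x) := by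
        conv_rhs => rw [show j - x = (j-x-1)+1 by omega, List.range'_succ]
      have e2 : List.range' (j+1) (x+k-j-1) ++ [x+k] = List.range' (j+1) (x+k-j) := by
        conv_rhs => rw [show x+k-j = (x+k-j-1)+1 by omega, List.range'_concat]
        congr 2
        omega
      have listEq : x :: ((List.range' (x+1) (j-x-1) ++ List.range' (j+1) (x+k-j-1)) ++ [x+k])
          = List.range' x (j-x) ++ List.range' (j+1) (x+k-j) := by
        rw [← e1, ← e2]
        simp [List.append_assoc]
      have hch' : List.Chain' (fun p q => p < q ∧ q ≤ p + 2 ∧ (AQ n).Adj (enc n p) (enc n q))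
          (List.range' x (j-x) ++ List.range' (j+1) (x+k-j)) := by
        rw [List.Chain', List.isChain_append]
        refine ⟨chain'_range' _ _ (fun i hi hi2 => ⟨by omega, by omega, adj_consec (by omega)⟩),
          chain'_range' _ _ (fun i hi hi2 => ⟨by omega, by omega, adj_consec (by omega)⟩), ?_⟩
        intro y hy z hz
        rw [show j - x = (j-x-1)+1 by omega, List.range'_concat, List.getLast?_concat] at hy
        rw [show x+k-j = (x+k-j-1)+1 by omega, List.range'_succ] at hz
        simp at hy hz
        subst hy
        subst hz
        have ey : x + (j - x - 1) = j - 1 := by omega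
        rw [ey]
        refine ⟨by omega, by omega, adj_skip hn hj4⟩
      rw [← listEq] at hch'
      have hbound : ∀ i ∈ x :: ((List.range' (x+1) (j-x-1) ++ List.range' (j+1) (x+k-j-1))
          ++ [x+k]), i < 2^n := by
        intro i hi
        rw [listEq, List.mem_append, List.mem_range'_1, List.mem_range'_1] at hi
        omega
      have hnd : (x :: ((List.range' (x+1) (j-x-1) ++ List.range' (j+1) (x+k-j-1))
          ++ [x+k])).Nodup := by
        rw [listEq]
        refine List.Nodup.append List.nodup_range' List.nodup_range' ?_
        intro a ha hb
        rw [List.mem_range'_1] at ha hb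
        omega
      have hclose : (AQ n).Adj (enc n (x+k)) (enc n x) := by
        rw [hxk]
        exact (adj_close (by omega) (by omega)).symm
      obtain ⟨v, c, hc, hl⟩ := cycle_of_nums x (x+k)
        (List.range' (x+1) (j-x-1) ++ List.range' (j+1) (x+k-j-1))
        hbound hnd hch' hclose (by omega)
      refine ⟨v, c, hc, ?_⟩
      rw [hl]
      simp only [List.length_append, List.length_range']
      omega
end
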